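/- Let C > 0 and let ζ̂ : (0,∞) → (0,∞) be a twice continuously differentiable bijection onto (0,∞) with ζ̂'(z) > 0 for all z > 0, satisfying (z² − ζ̂'(z)^{−2}) ζ̂''(z) + C z/ζ̂(z)² − 2/ζ̂(z) = 0 for all z > 0. For y ∈ (0,∞) set z(y) := ζ̂^{−1}(y), v̂(y) := z(y)·ζ̂'(z(y)), ρ̂(y) := C/(2 ζ̂(z(y))² ζ̂'(z(y))), and ω̂(y) := v̂(y)/y. Then for every y > 0 with v̂(y)² ≠ 1: v̂'(y) = 1 − 2v̂(y)/y + 2 v̂(y)²(ρ̂(y) − ω̂(y))/(1 − v̂(y)²) and ρ̂'(y) = −2 v̂(y) ρ̂(y)(ρ̂(y) − ω̂(y))/(1 − v̂(y)²). -/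

import Mathlib

set_option maxHeartbeats 1000000


/-- Solutions of the self-similar Lagrangian Larson–Penston equation map to steady
solutions of the self-similar Eulerian isothermal Euler–Poisson system. -/
theorem lagrangian_to_eulerian
    (C : ℝ) (hC : 0 < C)
    (ζ zinv v ρ ω : ℝ → ℝ)
    (hζ_pos : ∀ z > (0:ℝ), 0 < ζ z)
    (hζ_C2 : ContDiffOn ℝ 2 ζ (Set.Ioi 0))
    (hζ' : ∀ z > (0:ℝ), 0 < deriv ζ z)
    (hbij : Set.BijOn ζ (Set.Ioi 0) (Set.Ioi 0))
    (hzinv_left : ∀ z > (0:ℝ), zinv (ζ z) = z)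
    (hzinv_right : ∀ y > (0:ℝ), 0 < zinv y ∧ ζ (zinv y) = y)
    (hODE : ∀ z > (0:ℝ), (z ^ 2 - ((deriv ζ z) ^ 2)⁻¹) * deriv (deriv ζ) z
        + C * z / (ζ z) ^ 2 - 2 / ζ z = 0)
    (hv : ∀ y > (0:ℝ), v y = zinv y * deriv ζ (zinv y))
    (hρ : ∀ y > (0:ℝ), ρ y = C / (2 * (ζ (zinv y)) ^ 2 * deriv ζ (zinv y)))
    (hω : ∀ y > (0:ℝ), ω y = v y / y) :
    ∀ y > (0:ℝ), (v y) ^ 2 ≠ 1 →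
      (deriv v y = 1 - 2 * v y / y + 2 * (v y) ^ 2 * (ρ y - ω y) / (1 - (v y) ^ 2) ∧
       deriv ρ y = -2 * v y * ρ y * (ρ y - ω y) / (1 - (v y) ^ 2)) := by
  intro y hy hv1
  set z := zinv y with hzdef
  obtain ⟨hz, hζz⟩ := hzinv_right y hy
  set a := deriv ζ z with hadef
  set b := deriv (deriv ζ) z with hbdef
  have ha : 0 < a := hζ' z hz
  have ha0 : a ≠ 0 := ne_of_gt ha
  have hy0 : y ≠ 0 := ne_of_gt hy
  have hmem : Set.Ioi (0:ℝ) ∈ nhds z := (isOpen_Ioi).mem_nhds hz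
  -- strict derivative of ζ at z
  have hζ_cd : ContDiffAt ℝ 2 ζ z := hζ_C2.contDiffAt hmem
  have hsd : HasStrictDerivAt ζ a z := by
    have := (hζ_cd.of_le (by norm_num)).hasStrictDerivAt (n := 1) (by norm_num)
    exact this
  -- derivative of zinv at y
  have hinv_ev : ∀ᶠ x in nhds z, zinv (ζ x) = x := by
    filter_upwards [hmem] with x hx using hzinv_left x hx
  have hzinv_d : HasStrictDerivAt zinv a⁻¹ y := by
    have := hsd.to_local_left_inverse ha0 hinv_ev
    rwa [hζz] at this
  -- derivative of deriv ζ at z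
  have hζ'_diff : DifferentiableAt ℝ (deriv ζ) z := by
    have h1 : ContDiffOn ℝ 1 (deriv ζ) (Set.Ioi 0) :=
      hζ_C2.deriv_of_isOpen isOpen_Ioi (by norm_num)
    exact (h1.contDiffAt hmem).differentiableAt (by norm_num)
  have hζ''_d : HasDerivAt (deriv ζ) b z := hζ'_diff.hasDerivAt
  -- composed derivative
  have hA : HasDerivAt (fun y' => deriv ζ (zinv y')) (b * a⁻¹) y := by
    have := hζ''_d.comp y hzinv_d.hasDerivAt
    exact this
  -- eventual positivity of y' near y, and value facts
  have hy_ev : ∀ᶠ y' in nhds y, 0 < y' := eventually_gt_nhds hy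
  -- v eventually equals the formula
  have hv_ev : v =ᶠ[nhds y] fun y' => zinv y' * deriv ζ (zinv y') := by
    filter_upwards [hy_ev] with y' hy' using hv y' hy'
  have hρ_ev : ρ =ᶠ[nhds y] fun y' => C / (2 * y' ^ 2 * deriv ζ (zinv y')) := by
    filter_upwards [hy_ev] with y' hy'
    rw [hρ y' hy', (hzinv_right y' hy').2]
  -- derivative of v
  have hv_d : HasDerivAt (fun y' => zinv y' * deriv ζ (zinv y')) (a⁻¹ * a + z * (b * a⁻¹)) y := by
    have := (hzinv_d.hasDerivAt.mul hA)
    exact this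
  have hderiv_v : deriv v y = a⁻¹ * a + z * (b * a⁻¹) := by
    rw [Filter.EventuallyEq.deriv_eq hv_ev]
    exact hv_d.deriv
  -- derivative of ρ
  have hD : HasDerivAt (fun y' => 2 * y' ^ 2 * deriv ζ (zinv y'))
      (2 * (2 * y) * a + 2 * y ^ 2 * (b * a⁻¹)) y := by
    have hsq : HasDerivAt (fun y' : ℝ => 2 * y' ^ 2) (2 * (2 * y)) y := by
      simpa using ((hasDerivAt_pow 2 y).const_mul 2)
    exact hsq.mul hA
  have hD0 : 2 * y ^ 2 * a ≠ 0 := by positivity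
  have hρ_d : HasDerivAt (fun y' => C / (2 * y' ^ 2 * deriv ζ (zinv y')))
      ((0 * (2 * y ^ 2 * a) - C * (2 * (2 * y) * a + 2 * y ^ 2 * (b * a⁻¹))) / (2 * y ^ 2 * a) ^ 2)
      y := by
    exact (hasDerivAt_const y C).div hD hD0
  have hderiv_ρ : deriv ρ y =
      (0 * (2 * y ^ 2 * a) - C * (2 * (2 * y) * a + 2 * y ^ 2 * (b * a⁻¹))) / (2 * y ^ 2 * a) ^ 2 := by
    rw [Filter.EventuallyEq.deriv_eq hρ_ev]
    exact hρ_d.deriv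
  -- value facts
  have hvy : v y = z * a := by rw [hv y hy]
  have hρy : ρ y = C / (2 * y ^ 2 * a) := by rw [hρ y hy, hζz]
  have hωy : ω y = z * a / y := by rw [hω y hy, hvy]
  have hv1' : 1 - (z * a) ^ 2 ≠ 0 := by
    rw [hvy] at hv1
    intro h; apply hv1; nlinarith [h]
  -- the ODE at z, cleared of denominators
  have hode := hODE z hz
  rw [hζz, ← hadef, ← hbdef] at hode
  have hode' : (z ^ 2 * a ^ 2 - 1) * b * y ^ 2 + C * z * a ^ 2 - 2 * y * a ^ 2 = 0 := by
    have h2 : (z ^ 2 - (a ^ 2)⁻¹) * b + C * z / y ^ 2 - 2 / y = 0 := hode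
    field_simp at h2
    nlinarith [h2]
  have hden : z ^ 2 * a ^ 2 - 1 ≠ 0 := by
    intro h; apply hv1'; nlinarith [h]
  have hbmul : b * (y ^ 2 * (z ^ 2 * a ^ 2 - 1)) = 2 * y * a ^ 2 - C * z * a ^ 2 := by
    linear_combination hode'
  have hb : b = (2 * y * a ^ 2 - C * z * a ^ 2) / (y ^ 2 * (z ^ 2 * a ^ 2 - 1)) :=
    (eq_div_iff (mul_ne_zero (pow_ne_zero 2 hy0) hden)).mpr hbmul
  have hden2 : 1 - z ^ 2 * a ^ 2 ≠ 0 := by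
    intro h; apply hv1'; nlinarith [h]
  constructor
  · rw [hderiv_v, hvy, hρy, hωy, hb]
    field_simp
    have h3 : -1 + a ^ 2 * z ^ 2 ≠ 0 := by intro h; apply hden; linear_combination h
    have h4 : 1 - a ^ 2 * z ^ 2 ≠ 0 := by intro h; apply hden; linear_combination -h
    field_simp
    linear_combination (-2 * y * a * z + a * z ^ 2 * C) * inv_mul_cancel₀ h3
  · rw [hderiv_ρ, hvy, hρy, hωy, hb]
    field_simp
    have h3 : -1 + z ^ 2 * a ^ 2 ≠ 0 := by intro h; apply hden; linear_combination h
    have h4 : 1 - z ^ 2 * a ^ 2 ≠ 0 := by intro h; apply hden; linear_combination -h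
    field_simp
    ring
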